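/- Let K̂₁(x) = x K₁(x). For every M > 0, the integral ∫₀^M [1/(K₀(y) · (ε + y²))] · ( K̂₁(√(ε + y²))/K₀(√(ε + y²)) − K̂₁(y)/K₀(y) ) · y K₀(y)² dy is nonnegative for every ε > 0 and converges to 0 as ε → 0+. -/

import Mathlib

open MeasureTheory Filter Set Topology

/-- Macdonald function `K₀`, via its integral representation. -/
noncomputable def K0 (x : ℝ) : ℝ := ∫ t in Set.Ioi (0 : ℝ), Real.exp (-x * Real.cosh t)

/-- Macdonald function `K₁`, via its integral representation. -/
noncomputable def K1 (x : ℝ) : ℝ :=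
  ∫ t in Set.Ioi (0 : ℝ), Real.exp (-x * Real.cosh t) * Real.cosh t

/-- `K̂₁(x) = x K₁(x)`. -/
noncomputable def hatK1 (x : ℝ) : ℝ := x * K1 x

lemma self_le_cosh {t : ℝ} (ht : 0 ≤ t) : t ≤ Real.cosh t := by
  rcases eq_or_lt_of_le ht with h | h
  · rw [← h, Real.cosh_zero]; norm_num
  · exact le_of_lt ((Real.self_lt_sinh_iff.2 h).trans (Real.sinh_lt_cosh t))

lemma pow_le_factorial_mul_exp (x : ℝ) (hx : 0 ≤ x) (n : ℕ) :
    x ^ n ≤ n.factorial * Real.exp x := by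
  have h := Real.sum_le_exp_of_nonneg hx (n + 1)
  have h2 : x ^ n / (n.factorial : ℝ) ≤ ∑ i ∈ Finset.range (n + 1), x ^ i / i.factorial :=
    Finset.single_le_sum (f := fun i => x ^ i / (i.factorial : ℝ))
      (fun i _ => by positivity) (Finset.self_mem_range_succ n)
  have h3 : x ^ n / (n.factorial : ℝ) ≤ Real.exp x := h2.trans h
  have hn : (0:ℝ) < n.factorial := by positivity
  calc x ^ n = (x ^ n / (n.factorial : ℝ)) * n.factorial := by field_simp
    _ ≤ Real.exp x * n.factorial := mul_le_mul_of_nonneg_right h3 hn.le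
    _ = n.factorial * Real.exp x := mul_comm _ _

lemma integrand_bound (c : ℝ) (hc : 0 < c) (n : ℕ) {t : ℝ} (ht : 0 ≤ t) :
    Real.exp (-c * Real.cosh t) * Real.cosh t ^ n
      ≤ (n.factorial * (2 / c) ^ n) * Real.exp (-(c / 2) * t) := by
  have hcosh : (0:ℝ) < Real.cosh t := Real.cosh_pos t
  have h1 : Real.cosh t ^ n ≤ n.factorial * (2 / c) ^ n * Real.exp (c / 2 * Real.cosh t) := by
    have hple := pow_le_factorial_mul_exp (c / 2 * Real.cosh t) (by positivity) n
    have h2 : Real.cosh t ^ n = (2 / c) ^ n * (c / 2 * Real.cosh t) ^ n := by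
      rw [← mul_pow]
      congr 1
      field_simp
    rw [h2]
    calc (2 / c) ^ n * (c / 2 * Real.cosh t) ^ n
        ≤ (2 / c) ^ n * (n.factorial * Real.exp (c / 2 * Real.cosh t)) :=
          mul_le_mul_of_nonneg_left hple (by positivity)
      _ = n.factorial * (2 / c) ^ n * Real.exp (c / 2 * Real.cosh t) := by ring
  calc Real.exp (-c * Real.cosh t) * Real.cosh t ^ n
      ≤ Real.exp (-c * Real.cosh t) * (n.factorial * (2 / c) ^ n
          * Real.exp (c / 2 * Real.cosh t)) :=
        mul_le_mul_of_nonneg_left h1 (Real.exp_pos _).le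
    _ = n.factorial * (2 / c) ^ n * Real.exp (-(c / 2) * Real.cosh t) := by
        rw [mul_left_comm, ← Real.exp_add]
        ring_nf
    _ ≤ n.factorial * (2 / c) ^ n * Real.exp (-(c / 2) * t) := by
        apply mul_le_mul_of_nonneg_left _ (by positivity)
        apply Real.exp_le_exp.2
        have := self_le_cosh ht
        nlinarith

lemma cont_integrand (c : ℝ) (n : ℕ) :
    Continuous fun t => Real.exp (-c * Real.cosh t) * Real.cosh t ^ n := by
  fun_prop

lemma integrableOn_exp_cosh_pow (c : ℝ) (hc : 0 < c) (n : ℕ) :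
    IntegrableOn (fun t => Real.exp (-c * Real.cosh t) * Real.cosh t ^ n)
      (Set.Ioi (0:ℝ)) := by
  have hmaj : IntegrableOn
      (fun t => (n.factorial * (2 / c) ^ n) * Real.exp (-(c / 2) * t)) (Set.Ioi (0:ℝ)) :=
    (exp_neg_integrableOn_Ioi 0 (by positivity)).const_mul _
  refine MeasureTheory.Integrable.mono hmaj ((cont_integrand c n).aestronglyMeasurable) ?_
  rw [ae_restrict_iff' measurableSet_Ioi]
  filter_upwards with t ht
  have h1 : (0:ℝ) ≤ Real.exp (-c * Real.cosh t) * Real.cosh t ^ n := by positivity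
  have h2 : (0:ℝ) ≤ (n.factorial * (2 / c) ^ n) * Real.exp (-(c / 2) * t) := by positivity
  rw [Real.norm_eq_abs, Real.norm_eq_abs, abs_of_nonneg h1, abs_of_nonneg h2]
  exact integrand_bound c hc n (le_of_lt ht)

lemma integrableOn_K0 {x : ℝ} (hx : 0 < x) :
    IntegrableOn (fun t => Real.exp (-x * Real.cosh t)) (Set.Ioi (0:ℝ)) := by
  have := integrableOn_exp_cosh_pow x hx 0
  simpa using this

lemma integrableOn_K1 {x : ℝ} (hx : 0 < x) :
    IntegrableOn (fun t => Real.exp (-x * Real.cosh t) * Real.cosh t) (Set.Ioi (0:ℝ)) := by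
  have := integrableOn_exp_cosh_pow x hx 1
  simpa using this

lemma K0_pos {x : ℝ} (hx : 0 < x) : 0 < K0 x := by
  rw [K0]
  rw [MeasureTheory.setIntegral_pos_iff_support_of_nonneg_ae]
  · have : Function.support (fun t => Real.exp (-x * Real.cosh t)) = Set.univ := by
      ext t; simp [Function.mem_support, (Real.exp_pos _).ne']
    rw [this, Set.univ_inter]
    simp [Real.volume_Ioi]
  · filter_upwards with t using (Real.exp_pos _).le
  · exact integrableOn_K0 hx

lemma K1_pos {x : ℝ} (hx : 0 < x) : 0 < K1 x := by
  rw [K1]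
  rw [MeasureTheory.setIntegral_pos_iff_support_of_nonneg_ae]
  · have : Function.support (fun t => Real.exp (-x * Real.cosh t) * Real.cosh t) = Set.univ := by
      ext t
      simp [Function.mem_support]
      positivity
    rw [this, Set.univ_inter]
    simp [Real.volume_Ioi]
  · filter_upwards with t
    have := Real.cosh_pos t
    positivity
  · exact integrableOn_K1 hx

lemma K0_le_K1 {x : ℝ} (hx : 0 < x) : K0 x ≤ K1 x := by
  rw [K0, K1]
  apply MeasureTheory.setIntegral_mono_on (integrableOn_K0 hx) (integrableOn_K1 hx)
    measurableSet_Ioi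
  intro t _
  nth_rewrite 1 [← mul_one (Real.exp (-x * Real.cosh t))]
  exact mul_le_mul_of_nonneg_left (Real.one_le_cosh t) (Real.exp_pos _).le

lemma K0_anti {a b : ℝ} (ha : 0 < a) (hab : a ≤ b) : K0 b ≤ K0 a := by
  rw [K0, K0]
  apply MeasureTheory.setIntegral_mono_on (integrableOn_K0 (ha.trans_le hab))
    (integrableOn_K0 ha) measurableSet_Ioi
  intro t _
  apply Real.exp_le_exp.2
  have := Real.cosh_pos t
  nlinarith

lemma tendsto_exp_neg_mul {x : ℝ} (hx : 0 < x) (c : ℝ) :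
    Tendsto (fun t : ℝ => c * Real.exp (-x * t)) atTop (nhds 0) := by
  have h1 : Tendsto (fun t : ℝ => -x * t) atTop atBot := by
    apply Tendsto.const_mul_atTop_of_neg (neg_neg_of_pos hx) tendsto_id
  have h2 : Tendsto (fun t : ℝ => Real.exp (-x * t)) atTop (nhds 0) :=
    Real.tendsto_exp_atBot.comp h1
  simpa using h2.const_mul c

lemma integral_exp_neg_mul_Ioi_eq {x : ℝ} (hx : 0 < x) :
    ∫ t in Set.Ioi (0:ℝ), Real.exp (-x * t) = 1 / x := by
  have hderiv : ∀ t ∈ Set.Ioi (0:ℝ),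
      HasDerivAt (fun t : ℝ => -(1/x) * Real.exp (-x * t)) (Real.exp (-x * t)) t := by
    intro t _
    have h1 : HasDerivAt (fun t : ℝ => -x * t) (-x) t := by
      simpa using (hasDerivAt_id t).const_mul (-x)
    have h2 := (h1.exp).const_mul (-(1/x))
    refine h2.congr_deriv ?_
    have hx0 : x ≠ 0 := hx.ne'
    field_simp
  have hcont : ContinuousWithinAt (fun t : ℝ => -(1/x) * Real.exp (-x * t))
      (Set.Ici (0:ℝ)) 0 :=
    (Continuous.continuousWithinAt (by continuity))
  have htend := tendsto_exp_neg_mul hx (-(1/x))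
  have := integral_Ioi_of_hasDerivAt_of_nonneg hcont hderiv
    (fun t _ => (Real.exp_pos _).le) htend
  rw [this]
  simp

lemma K0_le_inv {x : ℝ} (hx : 0 < x) : K0 x ≤ 1 / x := by
  rw [K0, ← integral_exp_neg_mul_Ioi_eq hx]
  apply MeasureTheory.setIntegral_mono_on (integrableOn_K0 hx)
    (exp_neg_integrableOn_Ioi 0 hx) measurableSet_Ioi
  intro t ht
  apply Real.exp_le_exp.2
  have := self_le_cosh (le_of_lt ht)
  nlinarith

lemma sinh_deriv_aux {x : ℝ} (hx : 0 < x) :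
    (∀ t ∈ Set.Ici (0:ℝ), HasDerivAt (fun t : ℝ => -(1/x) * Real.exp (-x * Real.sinh t))
      (Real.cosh t * Real.exp (-x * Real.sinh t)) t) := by
  intro t _
  have h1 : HasDerivAt (fun t : ℝ => -x * Real.sinh t) (-x * Real.cosh t) t :=
    (Real.hasDerivAt_sinh t).const_mul (-x)
  have h2 := (h1.exp).const_mul (-(1/x))
  refine h2.congr_deriv ?_
  have hx0 : x ≠ 0 := hx.ne'
  field_simp

lemma tendsto_exp_sinh {x : ℝ} (hx : 0 < x) :
    Tendsto (fun t : ℝ => -(1/x) * Real.exp (-x * Real.sinh t)) atTop (nhds 0) := by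
  have h1 : Tendsto Real.sinh atTop atTop := by
    apply tendsto_atTop_mono' _ _ tendsto_id
    filter_upwards [eventually_gt_atTop (0:ℝ)] with t ht
    exact (Real.self_lt_sinh_iff.2 ht).le
  have h2 : Tendsto (fun t : ℝ => -x * Real.sinh t) atTop atBot :=
    Tendsto.const_mul_atTop_of_neg (neg_neg_of_pos hx) h1
  have h3 := Real.tendsto_exp_atBot.comp h2
  simpa using h3.const_mul (-(1/x))

lemma integrableOn_cosh_exp_sinh {x : ℝ} (hx : 0 < x) :
    IntegrableOn (fun t => Real.cosh t * Real.exp (-x * Real.sinh t)) (Set.Ioi (0:ℝ)) :=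
  integrableOn_Ioi_deriv_of_nonneg'
    (sinh_deriv_aux hx)
    (fun t _ => by positivity) (tendsto_exp_sinh hx)

lemma integral_cosh_exp_sinh {x : ℝ} (hx : 0 < x) :
    ∫ t in Set.Ioi (0:ℝ), Real.cosh t * Real.exp (-x * Real.sinh t) = 1 / x := by
  have := integral_Ioi_of_hasDerivAt_of_nonneg'
    (sinh_deriv_aux hx) (fun t _ => by positivity) (tendsto_exp_sinh hx)
  rw [this]
  simp

lemma K1_le_inv {x : ℝ} (hx : 0 < x) : K1 x ≤ 1 / x := by
  rw [K1, ← integral_cosh_exp_sinh hx]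
  apply MeasureTheory.setIntegral_mono_on (integrableOn_K1 hx)
    (integrableOn_cosh_exp_sinh hx) measurableSet_Ioi
  intro t _
  rw [mul_comm]
  apply mul_le_mul_of_nonneg_left _ (Real.cosh_pos t).le
  apply Real.exp_le_exp.2
  have := (Real.sinh_lt_cosh t).le
  nlinarith

lemma hatK1_le_one {x : ℝ} (hx : 0 < x) : hatK1 x ≤ 1 := by
  rw [hatK1]
  calc x * K1 x ≤ x * (1 / x) := mul_le_mul_of_nonneg_left (K1_le_inv hx) hx.le
    _ = 1 := by field_simp

lemma K0_ge_log {x : ℝ} (hx0 : 0 < x) (hx1 : x < 1) :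
    Real.exp (-1) * Real.log (1 / x) ≤ K0 x := by
  set L := Real.log (1 / x) with hL
  have hLpos : 0 < L := Real.log_pos (by rw [lt_div_iff₀ hx0]; linarith)
  have hexpL : Real.exp L = 1 / x := Real.exp_log (by positivity)
  have step1 : ∫ t in Set.Ioc (0:ℝ) L, Real.exp (-x * Real.cosh t) ≤ K0 x := by
    rw [K0]
    apply MeasureTheory.setIntegral_mono_set (integrableOn_K0 hx0)
    · filter_upwards with t using (Real.exp_pos _).le
    · exact (Set.Ioc_subset_Ioi_self).eventuallyLE
  refine le_trans ?_ step1
  have step2 : ∫ t in Set.Ioc (0:ℝ) L, Real.exp (-1 : ℝ)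
      ≤ ∫ t in Set.Ioc (0:ℝ) L, Real.exp (-x * Real.cosh t) := by
    apply MeasureTheory.setIntegral_mono_on
    · exact integrableOn_const measure_Ioc_lt_top.ne
    · exact (integrableOn_K0 hx0).mono_set Set.Ioc_subset_Ioi_self
    · exact measurableSet_Ioc
    · intro t ht
      apply Real.exp_le_exp.2
      have hcosh : Real.cosh t ≤ 1 / x := by
        rw [Real.cosh_eq, ← hexpL]
        have h1 : Real.exp t ≤ Real.exp L := Real.exp_le_exp.2 ht.2
        have h2 : Real.exp (-t) ≤ 1 := Real.exp_le_one_iff.2 (by linarith [ht.1])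
        have h3 : (1:ℝ) ≤ Real.exp L := by
          rw [Real.one_le_exp_iff]; exact hLpos.le
        linarith
      have hxx : x * (1 / x) = 1 := by field_simp
      nlinarith [mul_le_mul_of_nonneg_left hcosh hx0.le]
  refine le_trans (le_of_eq ?_) step2
  rw [MeasureTheory.setIntegral_const, Real.volume_real_Ioc_of_le hLpos.le, smul_eq_mul]
  ring

lemma hasDerivAt_K_aux (n : ℕ) {x : ℝ} (hx : 0 < x) :
    HasDerivAt (fun y => ∫ t in Set.Ioi (0:ℝ), Real.exp (-y * Real.cosh t) * Real.cosh t ^ n)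
      (-∫ t in Set.Ioi (0:ℝ), Real.exp (-x * Real.cosh t) * Real.cosh t ^ (n+1)) x := by
  set F : ℝ → ℝ → ℝ := fun y t => Real.exp (-y * Real.cosh t) * Real.cosh t ^ n with hF
  set F' : ℝ → ℝ → ℝ := fun y t => -(Real.exp (-y * Real.cosh t) * Real.cosh t ^ (n+1)) with hF'
  have hcosh : ∀ t : ℝ, (0:ℝ) < Real.cosh t := Real.cosh_pos
  have key := hasDerivAt_integral_of_dominated_loc_of_deriv_le
    (μ := (volume : Measure ℝ).restrict (Set.Ioi 0)) (F := F) (F' := F') (x₀ := x)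
    (bound := fun t => ((n+1).factorial * (2 / (x/2)) ^ (n+1)) * Real.exp (-((x/2) / 2) * t))
    (s := Metric.ball x (x/2)) (Metric.ball_mem_nhds x (half_pos hx))
    (Filter.Eventually.of_forall fun y => (cont_integrand y n).aestronglyMeasurable)
    (integrableOn_exp_cosh_pow x hx n)
    ((cont_integrand x (n+1)).neg.aestronglyMeasurable)
    ?_ ?_ ?_
  · have h2 : (∫ t in Set.Ioi (0:ℝ), F' x t)
        = -∫ t in Set.Ioi (0:ℝ), Real.exp (-x * Real.cosh t) * Real.cosh t ^ (n+1) := by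
      rw [hF', integral_neg]
    rw [← h2]
    exact key.2
  · rw [ae_restrict_iff' measurableSet_Ioi]
    filter_upwards with t ht
    intro y hy
    have hy2 : x / 2 < y := by
      have := abs_lt.1 (mem_ball_iff_norm.1 hy)
      linarith [this.1]
    have hb1 : Real.exp (-y * Real.cosh t) * Real.cosh t ^ (n+1)
        ≤ Real.exp (-(x/2) * Real.cosh t) * Real.cosh t ^ (n+1) := by
      apply mul_le_mul_of_nonneg_right _ (by positivity)
      apply Real.exp_le_exp.2
      nlinarith [hcosh t]
    have hb2 := integrand_bound (x/2) (by positivity) (n+1) (le_of_lt ht)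
    rw [hF']
    rw [Real.norm_eq_abs, abs_neg, abs_of_nonneg (by positivity)]
    exact hb1.trans hb2
  · exact ((exp_neg_integrableOn_Ioi 0 (by positivity : (0:ℝ) < (x/2)/2)).const_mul _)
  · rw [ae_restrict_iff' measurableSet_Ioi]
    filter_upwards with t ht
    intro y _
    have h1 : HasDerivAt (fun y : ℝ => -y * Real.cosh t) (-Real.cosh t) y := by
      simpa using ((hasDerivAt_id y).neg).mul_const (Real.cosh t)
    have h2 := (h1.exp).mul_const (Real.cosh t ^ n)
    refine h2.congr_deriv ?_
    rw [hF']
    ring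

lemma hasDerivAt_K0 {x : ℝ} (hx : 0 < x) : HasDerivAt K0 (-K1 x) x := by
  have h := hasDerivAt_K_aux 0 hx
  simp only [pow_zero, mul_one, zero_add, pow_one] at h
  exact h

lemma hasDerivAt_K1 {x : ℝ} (hx : 0 < x) :
    HasDerivAt K1 (-∫ t in Set.Ioi (0:ℝ), Real.exp (-x * Real.cosh t) * Real.cosh t ^ 2) x := by
  have h := hasDerivAt_K_aux 1 hx
  simp only [pow_one] at h
  exact h

lemma integral_total_deriv {x : ℝ} (hx : 0 < x) :
    ∫ t in Set.Ioi (0:ℝ),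
      Real.exp (-x * Real.cosh t) * (Real.cosh t - x * Real.sinh t ^ 2) = 0 := by
  set g : ℝ → ℝ := fun t => Real.exp (-x * Real.cosh t) * Real.sinh t with hg
  have hderiv : ∀ t ∈ Set.Ioi (0:ℝ), HasDerivAt g
      (Real.exp (-x * Real.cosh t) * (Real.cosh t - x * Real.sinh t ^ 2)) t := by
    intro t _
    have h1 : HasDerivAt (fun t : ℝ => -x * Real.cosh t) (-x * Real.sinh t) t :=
      (Real.hasDerivAt_cosh t).const_mul (-x)
    have h2 := (h1.exp).mul (Real.hasDerivAt_sinh t)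
    refine h2.congr_deriv ?_
    ring
  have habs : ∀ t : ℝ, |Real.sinh t| ≤ Real.cosh t := fun t => by
    have h := Real.cosh_sq t
    have := Real.cosh_pos t
    rw [abs_le]
    constructor <;> nlinarith
  have hint : IntegrableOn
      (fun t => Real.exp (-x * Real.cosh t) * (Real.cosh t - x * Real.sinh t ^ 2))
      (Set.Ioi (0:ℝ)) := by
    have hmaj : IntegrableOn
        (fun t => Real.exp (-x * Real.cosh t) * Real.cosh t
          + x * (Real.exp (-x * Real.cosh t) * Real.cosh t ^ 2)) (Set.Ioi (0:ℝ)) :=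
      (integrableOn_K1 hx).add ((integrableOn_exp_cosh_pow x hx 2).const_mul x)
    refine MeasureTheory.Integrable.mono hmaj ?_ ?_
    · apply Continuous.aestronglyMeasurable
      fun_prop
    · rw [ae_restrict_iff' measurableSet_Ioi]
      filter_upwards with t _
      rw [Real.norm_eq_abs, Real.norm_eq_abs]
      have h1 : |Real.exp (-x * Real.cosh t) * (Real.cosh t - x * Real.sinh t ^ 2)|
          = Real.exp (-x * Real.cosh t) * |Real.cosh t - x * Real.sinh t ^ 2| := by
        rw [abs_mul, abs_of_nonneg (Real.exp_pos _).le]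
      rw [h1]
      have h2 : |Real.cosh t - x * Real.sinh t ^ 2| ≤ Real.cosh t + x * Real.cosh t ^ 2 := by
        have hs := habs t
        have hc := Real.cosh_pos t
        have hsq : Real.sinh t ^ 2 ≤ Real.cosh t ^ 2 := by
          rw [← sq_abs]
          exact pow_le_pow_left₀ (abs_nonneg _) hs 2
        rw [abs_le]
        constructor <;> nlinarith
      have h3 : Real.exp (-x * Real.cosh t) * |Real.cosh t - x * Real.sinh t ^ 2|
          ≤ Real.exp (-x * Real.cosh t) * (Real.cosh t + x * Real.cosh t ^ 2) :=
        mul_le_mul_of_nonneg_left h2 (Real.exp_pos _).le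
      have h4 : |Real.exp (-x * Real.cosh t) * Real.cosh t
          + x * (Real.exp (-x * Real.cosh t) * Real.cosh t ^ 2)|
          = Real.exp (-x * Real.cosh t) * Real.cosh t
          + x * (Real.exp (-x * Real.cosh t) * Real.cosh t ^ 2) := abs_of_nonneg (by positivity)
      rw [h4]
      refine h3.trans (le_of_eq (by ring))
  have htend : Tendsto g atTop (nhds 0) := by
    refine squeeze_zero_norm' ?_
      (tendsto_exp_neg_mul (half_pos hx) ((Nat.factorial 1 : ℝ) * (2/x)^1))
    · filter_upwards [eventually_ge_atTop (0:ℝ)] with t ht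
      rw [hg, Real.norm_eq_abs, abs_mul, abs_of_nonneg (Real.exp_pos _).le]
      calc Real.exp (-x * Real.cosh t) * |Real.sinh t|
          ≤ Real.exp (-x * Real.cosh t) * Real.cosh t ^ 1 := by
            rw [pow_one]; exact mul_le_mul_of_nonneg_left (habs t) (Real.exp_pos _).le
        _ ≤ _ := integrand_bound x hx 1 ht
  have hcont : ContinuousWithinAt g (Set.Ici (0:ℝ)) 0 := by
    apply Continuous.continuousWithinAt
    fun_prop
  have := integral_Ioi_of_hasDerivAt_of_tendsto hcont hderiv hint htend
  rw [this, hg]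
  simp

lemma hasDerivAt_hatK1 {x : ℝ} (hx : 0 < x) : HasDerivAt hatK1 (-(x * K0 x)) x := by
  have hK1 := hasDerivAt_K1 hx
  have h := (hasDerivAt_id x).mul hK1
  have hident : 1 * K1 x + x *
      (-∫ t in Set.Ioi (0:ℝ), Real.exp (-x * Real.cosh t) * Real.cosh t ^ 2)
      = -(x * K0 x) := by
    have h0 := integral_total_deriv hx
    have hexp : ∀ t ∈ Set.Ioi (0:ℝ),
        Real.exp (-x * Real.cosh t) * (Real.cosh t - x * Real.sinh t ^ 2)
        = (Real.exp (-x * Real.cosh t) * Real.cosh t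
            - x * (Real.exp (-x * Real.cosh t) * Real.cosh t ^ 2))
          + x * Real.exp (-x * Real.cosh t) := by
      intro t _
      rw [Real.sinh_sq]
      ring
    rw [MeasureTheory.setIntegral_congr_fun measurableSet_Ioi hexp] at h0
    rw [MeasureTheory.integral_add, MeasureTheory.integral_sub, MeasureTheory.integral_const_mul,
        MeasureTheory.integral_const_mul] at h0
    · have hK1eq : K1 x = ∫ t in Set.Ioi (0:ℝ), Real.exp (-x * Real.cosh t) * Real.cosh t := rfl
      have hK0eq : K0 x = ∫ t in Set.Ioi (0:ℝ), Real.exp (-x * Real.cosh t) := rfl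
      rw [← hK1eq, ← hK0eq] at h0
      linarith
    · exact integrableOn_K1 hx
    · exact (integrableOn_exp_cosh_pow x hx 2).const_mul x
    · exact (integrableOn_K1 hx).sub ((integrableOn_exp_cosh_pow x hx 2).const_mul x)
    · exact (integrableOn_K0 hx).const_mul x
  rw [← hident]
  exact h

lemma hatK1_antitoneOn : AntitoneOn hatK1 (Set.Ioi (0:ℝ)) := by
  apply antitoneOn_of_deriv_nonpos (convex_Ioi 0)
  · intro y hy
    exact (hasDerivAt_hatK1 hy).continuousAt.continuousWithinAt
  · rw [interior_Ioi]
    intro y hy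
    exact (hasDerivAt_hatK1 hy).differentiableAt.differentiableWithinAt
  · rw [interior_Ioi]
    intro y hy
    rw [(hasDerivAt_hatK1 hy).deriv]
    have := K0_pos hy
    have hy' : (0:ℝ) < y := hy
    nlinarith

lemma ratio_hasDerivAt {y : ℝ} (hy : 0 < y) :
    HasDerivAt (fun z => hatK1 z / K0 z)
      ((-(y * K0 y) * K0 y - hatK1 y * (-K1 y)) / K0 y ^ 2) y :=
  (hasDerivAt_hatK1 hy).div (hasDerivAt_K0 hy) (K0_pos hy).ne'

lemma ratio_monotoneOn : MonotoneOn (fun x => hatK1 x / K0 x) (Set.Ioi (0:ℝ)) := by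
  apply monotoneOn_of_deriv_nonneg (convex_Ioi 0)
  · intro y hy
    exact (ratio_hasDerivAt hy).continuousAt.continuousWithinAt
  · rw [interior_Ioi]
    intro y hy
    exact (ratio_hasDerivAt hy).differentiableAt.differentiableWithinAt
  · rw [interior_Ioi]
    intro y hy
    rw [(ratio_hasDerivAt hy).deriv]
    apply div_nonneg _ (sq_nonneg _)
    have h1 := K0_le_K1 hy
    have h2 := K0_pos hy
    have hy' : (0:ℝ) < y := hy
    rw [hatK1]
    nlinarith [mul_le_mul h1 h1 h2.le (h2.trans_le h1).le]

lemma K1_continuousAt {x : ℝ} (hx : 0 < x) : ContinuousAt K1 x :=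
  (hasDerivAt_K1 hx).continuousAt

lemma K0_continuousAt {x : ℝ} (hx : 0 < x) : ContinuousAt K0 x :=
  (hasDerivAt_K0 hx).continuousAt

lemma hatK1_continuousAt {x : ℝ} (hx : 0 < x) : ContinuousAt hatK1 x :=
  (hasDerivAt_hatK1 hx).continuousAt

lemma hatK1_nonneg {x : ℝ} (hx : 0 < x) : 0 ≤ hatK1 x := by
  rw [hatK1]; exact mul_nonneg hx.le (K1_pos hx).le

lemma K0_sub_K0_le_log {a b : ℝ} (ha : 0 < a) (hab : a ≤ b) :
    K0 a - K0 b ≤ Real.log b - Real.log a := by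
  have hb : 0 < b := ha.trans_le hab
  have huIcc : Set.uIcc a b = Set.Icc a b := Set.uIcc_of_le hab
  have hderiv : ∀ x ∈ Set.uIcc a b, HasDerivAt K0 (-K1 x) x := by
    intro x hx
    rw [huIcc] at hx
    exact hasDerivAt_K0 (lt_of_lt_of_le ha hx.1)
  have hK1cont : ContinuousOn K1 (Set.uIcc a b) := by
    intro x hx
    rw [huIcc] at hx
    exact (K1_continuousAt (lt_of_lt_of_le ha hx.1)).continuousWithinAt
  have hint : IntervalIntegrable (fun x => -K1 x) volume a b :=
    (hK1cont.neg).intervalIntegrable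
  have hftc := intervalIntegral.integral_eq_sub_of_hasDerivAt hderiv hint
  have h1 : K0 a - K0 b = ∫ x in a..b, K1 x := by
    rw [intervalIntegral.integral_neg] at hftc
    linarith [hftc]
  rw [h1]
  have h0 : (0:ℝ) ∉ Set.uIcc a b := by
    rw [huIcc]
    intro h
    exact absurd h.1 (not_le.2 ha)
  have h2 : ∫ x in a..b, K1 x ≤ ∫ x in a..b, 1 / x := by
    apply intervalIntegral.integral_mono_on hab
    · exact (hK1cont.mono (by rw [huIcc])).intervalIntegrable
    · refine ContinuousOn.intervalIntegrable ?_
      intro x hx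
      rw [huIcc] at hx
      exact (continuousAt_const.div continuousAt_id
        (ne_of_gt (lt_of_lt_of_le ha hx.1))).continuousWithinAt
    · intro x hx
      exact K1_le_inv (lt_of_lt_of_le ha hx.1)
  refine h2.trans (le_of_eq ?_)
  rw [integral_one_div h0, Real.log_div hb.ne' ha.ne']

lemma ratio_diff_le {a b : ℝ} (ha : 0 < a) (hab : a ≤ b) :
    hatK1 b / K0 b - hatK1 a / K0 a ≤ (K0 a - K0 b) / (K0 a * K0 b) := by
  have hb : 0 < b := ha.trans_le hab
  have hK0a := K0_pos ha
  have hK0b := K0_pos hb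
  have h1 : hatK1 b ≤ hatK1 a := hatK1_antitoneOn ha hb hab
  have h2 : hatK1 a ≤ 1 := hatK1_le_one ha
  have h3 : 0 ≤ hatK1 b := hatK1_nonneg hb
  have h5 : K0 b ≤ K0 a := K0_anti ha hab
  rw [div_sub_div _ _ hK0b.ne' hK0a.ne', div_le_div_iff₀ (by positivity) (by positivity)]
  nlinarith [mul_le_mul_of_nonneg_right h1 hK0a.le,
    mul_le_mul_of_nonneg_right h2 (sub_nonneg.2 h5), mul_pos hK0a hK0b]

lemma sqrt_ge_self_aux {ε y : ℝ} (hε : 0 < ε) (hy : 0 ≤ y) : y ≤ Real.sqrt (ε + y ^ 2) := by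
  rw [show y = Real.sqrt (y ^ 2) by rw [Real.sqrt_sq hy]]
  rw [Real.sqrt_sq hy]
  rw [show y = Real.sqrt (y ^ 2) by rw [Real.sqrt_sq hy]]
  apply Real.sqrt_le_sqrt
  nlinarith [Real.sq_sqrt (by positivity : (0:ℝ) ≤ y^2), Real.sqrt_nonneg (y^2)]

lemma f_nonneg {ε y : ℝ} (hε : 0 < ε) (hy : 0 < y) :
    0 ≤ (1 / (K0 y * (ε + y ^ 2)))
        * (hatK1 (Real.sqrt (ε + y ^ 2)) / K0 (Real.sqrt (ε + y ^ 2)) - hatK1 y / K0 y)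
        * (y * K0 y ^ 2) := by
  have hys : y ≤ Real.sqrt (ε + y ^ 2) := sqrt_ge_self_aux hε hy.le
  have hs : 0 < Real.sqrt (ε + y ^ 2) := lt_of_lt_of_le hy hys
  apply mul_nonneg (mul_nonneg _ _)
  · positivity
  · have := K0_pos hy
    positivity
  · rw [sub_nonneg]
    exact ratio_monotoneOn hy hs hys

lemma f_le_main {ε y : ℝ} (hε : 0 < ε) (hy : 0 < y) :
    (1 / (K0 y * (ε + y ^ 2)))
        * (hatK1 (Real.sqrt (ε + y ^ 2)) / K0 (Real.sqrt (ε + y ^ 2)) - hatK1 y / K0 y)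
        * (y * K0 y ^ 2)
      ≤ y * (Real.log (Real.sqrt (ε + y ^ 2)) - Real.log y)
          / ((ε + y ^ 2) * K0 (Real.sqrt (ε + y ^ 2))) := by
  set s := Real.sqrt (ε + y ^ 2) with hsdef
  have hys : y ≤ s := sqrt_ge_self_aux hε hy.le
  have hs : 0 < s := lt_of_lt_of_le hy hys
  have hK0y := K0_pos hy
  have hK0s := K0_pos hs
  have hse : 0 < ε + y ^ 2 := by positivity
  have step1 : hatK1 s / K0 s - hatK1 y / K0 y ≤ (K0 y - K0 s) / (K0 y * K0 s) :=
    ratio_diff_le hy hys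
  have step2 : K0 y - K0 s ≤ Real.log s - Real.log y := K0_sub_K0_le_log hy hys
  have step3 : hatK1 s / K0 s - hatK1 y / K0 y ≤ (Real.log s - Real.log y) / (K0 y * K0 s) :=
    step1.trans (by gcongr)
  calc (1 / (K0 y * (ε + y ^ 2))) * (hatK1 s / K0 s - hatK1 y / K0 y) * (y * K0 y ^ 2)
      = (y * K0 y / (ε + y ^ 2)) * (hatK1 s / K0 s - hatK1 y / K0 y) := by
        field_simp
    _ ≤ (y * K0 y / (ε + y ^ 2)) * ((Real.log s - Real.log y) / (K0 y * K0 s)) := by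
        apply mul_le_mul_of_nonneg_left step3 (by positivity)
    _ = y * (Real.log s - Real.log y) / ((ε + y ^ 2) * K0 s) := by
        field_simp

lemma f_le_const {ε y M : ℝ} (hε : 0 < ε) (hε1 : ε ≤ 1) (hy : 0 < y) (hyM : y ≤ M) :
    (1 / (K0 y * (ε + y ^ 2)))
        * (hatK1 (Real.sqrt (ε + y ^ 2)) / K0 (Real.sqrt (ε + y ^ 2)) - hatK1 y / K0 y)
        * (y * K0 y ^ 2)
      ≤ 1 / (ε * K0 (Real.sqrt (1 + M ^ 2))) := by
  set s := Real.sqrt (ε + y ^ 2) with hsdef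
  have hys : y ≤ s := sqrt_ge_self_aux hε hy.le
  have hs : 0 < s := lt_of_lt_of_le hy hys
  have hK0y := K0_pos hy
  have hK0s := K0_pos hs
  have hsT : s ≤ Real.sqrt (1 + M ^ 2) := by
    apply Real.sqrt_le_sqrt
    nlinarith
  have hT : (0:ℝ) < Real.sqrt (1 + M ^ 2) := lt_of_lt_of_le hs hsT
  have hK0T : 0 < K0 (Real.sqrt (1 + M ^ 2)) := K0_pos hT
  have hK0sT : K0 (Real.sqrt (1 + M ^ 2)) ≤ K0 s := K0_anti hs hsT
  have hyK0 : y * K0 y ≤ 1 := by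
    have := K0_le_inv hy
    calc y * K0 y ≤ y * (1 / y) := mul_le_mul_of_nonneg_left this hy.le
      _ = 1 := by field_simp
  have hRs : hatK1 s / K0 s ≤ 1 / K0 (Real.sqrt (1 + M ^ 2)) := by
    calc hatK1 s / K0 s ≤ 1 / K0 s := by gcongr; exact hatK1_le_one hs
      _ ≤ 1 / K0 (Real.sqrt (1 + M ^ 2)) := by gcongr
  have hRy : 0 ≤ hatK1 y / K0 y := div_nonneg (hatK1_nonneg hy) hK0y.le
  have hdiff : hatK1 s / K0 s - hatK1 y / K0 y ≤ 1 / K0 (Real.sqrt (1 + M ^ 2)) := by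
    linarith
  have hdiffnn : 0 ≤ hatK1 s / K0 s - hatK1 y / K0 y :=
    sub_nonneg.2 (ratio_monotoneOn hy hs hys)
  calc (1 / (K0 y * (ε + y ^ 2))) * (hatK1 s / K0 s - hatK1 y / K0 y) * (y * K0 y ^ 2)
      = (y * K0 y / (ε + y ^ 2)) * (hatK1 s / K0 s - hatK1 y / K0 y) := by
        field_simp
    _ ≤ (1 / ε) * (1 / K0 (Real.sqrt (1 + M ^ 2))) := by
        apply mul_le_mul _ hdiff hdiffnn (by positivity)
        rw [div_le_div_iff₀ (by positivity) hε]
        nlinarith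
    _ = 1 / (ε * K0 (Real.sqrt (1 + M ^ 2))) := by
        rw [div_mul_div_comm, one_mul]

lemma f_continuousOn {ε M : ℝ} (hε : 0 < ε) :
    ContinuousOn (fun y => (1 / (K0 y * (ε + y ^ 2)))
        * (hatK1 (Real.sqrt (ε + y ^ 2)) / K0 (Real.sqrt (ε + y ^ 2)) - hatK1 y / K0 y)
        * (y * K0 y ^ 2)) (Set.Ioc (0:ℝ) M) := by
  intro y hy
  have hy0 : 0 < y := hy.1
  have hys : y ≤ Real.sqrt (ε + y ^ 2) := sqrt_ge_self_aux hε hy0.le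
  have hs : 0 < Real.sqrt (ε + y ^ 2) := lt_of_lt_of_le hy0 hys
  apply ContinuousAt.continuousWithinAt
  have c1 : ContinuousAt (fun y : ℝ => Real.sqrt (ε + y ^ 2)) y :=
    Real.continuous_sqrt.continuousAt.comp (by fun_prop)
  have cK0s := ContinuousAt.comp (x := y) (K0_continuousAt hs) c1
  have chatK1s := ContinuousAt.comp (x := y) (hatK1_continuousAt hs) c1
  have cK0 : ContinuousAt K0 y := K0_continuousAt hy0
  have chat : ContinuousAt hatK1 y := hatK1_continuousAt hy0
  have hne1 : K0 y * (ε + y ^ 2) ≠ 0 := by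
    have := K0_pos hy0
    positivity
  apply ContinuousAt.mul
  apply ContinuousAt.mul
  · exact continuousAt_const.div (cK0.mul (by fun_prop)) hne1
  · exact (chatK1s.div cK0s (K0_pos hs).ne').sub (chat.div cK0 (K0_pos hy0).ne')
  · exact continuousAt_id.mul (cK0.pow 2)

lemma f_integrableOn {ε M : ℝ} (hε : 0 < ε) (hε1 : ε ≤ 1) :
    IntegrableOn (fun y => (1 / (K0 y * (ε + y ^ 2)))
        * (hatK1 (Real.sqrt (ε + y ^ 2)) / K0 (Real.sqrt (ε + y ^ 2)) - hatK1 y / K0 y)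
        * (y * K0 y ^ 2)) (Set.Ioc (0:ℝ) M) := by
  apply MeasureTheory.Integrable.mono'
    (g := fun _ => 1 / (ε * K0 (Real.sqrt (1 + M ^ 2))))
  · exact integrableOn_const measure_Ioc_lt_top.ne
  · exact (f_continuousOn hε).aestronglyMeasurable measurableSet_Ioc
  · rw [ae_restrict_iff' measurableSet_Ioc]
    filter_upwards with y hy
    rw [Real.norm_eq_abs, abs_of_nonneg (f_nonneg hε hy.1)]
    exact f_le_const hε hε1 hy.1 hy.2

lemma integral_inv_sq_bound {a b c : ℝ} (ha : 0 < a) (hab : a ≤ b) (hc : 0 ≤ c) :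
    ∫ y in Set.Ioc a b, c / y ^ 2 ≤ c / a := by
  rw [← intervalIntegral.integral_of_le hab]
  have hderiv : ∀ y ∈ Set.uIcc a b, HasDerivAt (fun y : ℝ => -(c / y)) (c / y ^ 2) y := by
    intro y hy
    rw [Set.uIcc_of_le hab] at hy
    have hy0 : y ≠ 0 := (lt_of_lt_of_le ha hy.1).ne'
    have h := ((hasDerivAt_inv hy0).const_mul c).neg
    refine h.congr_deriv ?_
    ring
  have hint : IntervalIntegrable (fun y : ℝ => c / y ^ 2) volume a b := by
    apply ContinuousOn.intervalIntegrable
    intro y hy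
    rw [Set.uIcc_of_le hab] at hy
    have hy0 : (0:ℝ) < y := lt_of_lt_of_le ha hy.1
    exact (continuousAt_const.div (by fun_prop) (by positivity)).continuousWithinAt
  rw [intervalIntegral.integral_eq_sub_of_hasDerivAt hderiv hint]
  have hb : 0 < b := lt_of_lt_of_le ha hab
  have : c / b ≥ 0 := by positivity
  linarith

lemma integral_sqrt_bound {σ c : ℝ} (hσ : 0 < σ) (hc : 0 ≤ c) :
    ∫ y in Set.Ioc (0:ℝ) σ, c * Real.sqrt y ≤ c * (σ * Real.sqrt σ) := by
  rw [← intervalIntegral.integral_of_le hσ.le]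
  have h1 : ∫ y in (0:ℝ)..σ, c * Real.sqrt y = c * ∫ y in (0:ℝ)..σ, y ^ ((1:ℝ)/2) := by
    rw [← intervalIntegral.integral_const_mul]
    apply intervalIntegral.integral_congr
    intro y _
    show c * Real.sqrt y = c * y ^ ((1:ℝ)/2)
    rw [Real.sqrt_eq_rpow]
  rw [h1, integral_rpow (Or.inl (by norm_num))]
  have h2 : ((1:ℝ)/2 + 1) = (3:ℝ)/2 := by norm_num
  have h3 : σ ^ ((1:ℝ)/2 + 1) = σ * Real.sqrt σ := by
    rw [Real.rpow_add hσ, Real.rpow_one, Real.sqrt_eq_rpow]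
    ring
  rw [Real.zero_rpow (by norm_num : ((1:ℝ)/2 + 1) ≠ 0), h3]
  have hnn : 0 ≤ σ * Real.sqrt σ := by positivity
  rw [h2]
  calc c * ((σ * Real.sqrt σ - 0) / (3/2)) = (2/3) * (c * (σ * Real.sqrt σ)) := by ring
    _ ≤ 1 * (c * (σ * Real.sqrt σ)) := by
        apply mul_le_mul_of_nonneg_right (by norm_num) (by positivity)
    _ = c * (σ * Real.sqrt σ) := one_mul _

lemma f_le_aux {ε y c : ℝ} (hε : 0 < ε) (hy : 0 < y)
    (h : y * (Real.log (Real.sqrt (ε + y ^ 2)) - Real.log y)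
        ≤ c * ((ε + y ^ 2) * K0 (Real.sqrt (ε + y ^ 2)))) :
    (1 / (K0 y * (ε + y ^ 2)))
        * (hatK1 (Real.sqrt (ε + y ^ 2)) / K0 (Real.sqrt (ε + y ^ 2)) - hatK1 y / K0 y)
        * (y * K0 y ^ 2) ≤ c := by
  refine (f_le_main hε hy).trans ?_
  have hs : 0 < Real.sqrt (ε + y ^ 2) :=
    lt_of_lt_of_le hy (sqrt_ge_self_aux hε hy.le)
  have hpos : 0 < (ε + y ^ 2) * K0 (Real.sqrt (ε + y ^ 2)) := by
    have := K0_pos hs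
    positivity
  exact (div_le_iff₀ hpos).2 h

lemma log_diff_le_sqrt {y s : ℝ} (hy : 0 < y) (hys : y ≤ s) :
    y * (Real.log s - Real.log y) ≤ 2 * Real.sqrt y * Real.sqrt s := by
  have hs : 0 < s := lt_of_lt_of_le hy hys
  have h1 : Real.log s - Real.log y = Real.log (s / y) := (Real.log_div hs.ne' hy.ne').symm
  have h2 : Real.log (s / y) ≤ 2 * Real.sqrt (s / y) := by
    have h3 : Real.log (Real.sqrt (s / y)) = Real.log (s / y) / 2 :=
      Real.log_sqrt (by positivity)
    have h4 : Real.log (Real.sqrt (s / y)) ≤ Real.sqrt (s / y) - 1 :=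
      Real.log_le_sub_one_of_pos (Real.sqrt_pos.2 (by positivity))
    have h5 : (0:ℝ) ≤ Real.sqrt (s / y) := Real.sqrt_nonneg _
    linarith
  have h6 : Real.sqrt (s / y) = Real.sqrt s / Real.sqrt y := Real.sqrt_div' s hy.le ▸ by
    rw [Real.sqrt_div hs.le]
  rw [h1]
  calc y * Real.log (s / y) ≤ y * (2 * (Real.sqrt s / Real.sqrt y)) := by
        apply mul_le_mul_of_nonneg_left _ hy.le
        rw [← h6]; exact h2
    _ = 2 * (y / Real.sqrt y) * Real.sqrt s := by ring
    _ = 2 * Real.sqrt y * Real.sqrt s := by rw [Real.div_sqrt]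

lemma log_diff_le_div {y s σ : ℝ} (hy : 0 < y) (hys : y ≤ s) (hsσ : s ≤ y + σ) :
    y * (Real.log s - Real.log y) ≤ σ := by
  have hs : 0 < s := lt_of_lt_of_le hy hys
  have h1 : Real.log s - Real.log y = Real.log (s / y) := (Real.log_div hs.ne' hy.ne').symm
  have h2 : Real.log (s / y) ≤ s / y - 1 := Real.log_le_sub_one_of_pos (by positivity)
  rw [h1]
  calc y * Real.log (s / y) ≤ y * (s / y - 1) := mul_le_mul_of_nonneg_left h2 hy.le
    _ = s - y := by field_simp
    _ ≤ σ := by linarith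

lemma s_le_add {ε y : ℝ} (hε : 0 < ε) (hy : 0 ≤ y) :
    Real.sqrt (ε + y ^ 2) ≤ y + Real.sqrt ε := by
  have h1 : ε + y ^ 2 ≤ (y + Real.sqrt ε) ^ 2 := by
    have := Real.sq_sqrt hε.le
    nlinarith [Real.sqrt_nonneg ε, hy]
  calc Real.sqrt (ε + y ^ 2) ≤ Real.sqrt ((y + Real.sqrt ε) ^ 2) := Real.sqrt_le_sqrt h1
    _ = y + Real.sqrt ε := Real.sqrt_sq (by positivity)

lemma K0s_lower {ε y : ℝ} (hε : 0 < ε) (hε16 : ε ≤ 1/16) (hy : 0 < y)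
    (hyy : y ^ 2 ≤ Real.sqrt ε) :
    Real.exp (-1) * (-Real.log ε / 8) ≤ K0 (Real.sqrt (ε + y ^ 2)) := by
  set σ := Real.sqrt ε with hσdef
  have hσ : 0 < σ := Real.sqrt_pos.2 hε
  have hσ4 : σ ≤ 1/4 := by
    rw [hσdef, show (1/4 : ℝ) = Real.sqrt ((1/4)^2) from (Real.sqrt_sq (by norm_num)).symm]
    apply Real.sqrt_le_sqrt
    norm_num
    linarith
  have hεσ : ε ≤ σ := by
    have := Real.sq_sqrt hε.le
    nlinarith
  have hs2 : ε + y ^ 2 ≤ 2 * σ := by linarith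
  set s := Real.sqrt (ε + y ^ 2) with hsdef
  have hs : 0 < s := lt_of_lt_of_le hy (sqrt_ge_self_aux hε hy.le)
  have hs1 : s < 1 := by
    have h1 : s ^ 2 = ε + y ^ 2 := Real.sq_sqrt (by positivity)
    nlinarith
  have hlogs : Real.log s = Real.log (ε + y ^ 2) / 2 := Real.log_sqrt (by positivity)
  have hL : 0 < -Real.log ε := by
    have := Real.log_neg hε (by linarith)
    linarith
  have hlog2σ : Real.log (ε + y ^ 2) ≤ Real.log (2 * σ) :=
    Real.log_le_log (by positivity) hs2
  have hlogσ : Real.log σ = Real.log ε / 2 := Real.log_sqrt hε.le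
  have hlog16 : Real.log 16 ≤ -Real.log ε := by
    rw [show -Real.log ε = Real.log (1/ε) by rw [one_div, Real.log_inv]]
    apply Real.log_le_log (by norm_num)
    rw [le_one_div (by norm_num) hε]
    linarith
  have hlog16' : Real.log 16 = 4 * Real.log 2 := by
    rw [show (16:ℝ) = 2^4 by norm_num, Real.log_pow]
    norm_num
  have hkey : -Real.log ε / 8 ≤ -Real.log s := by
    have h2 : Real.log (2 * σ) = Real.log 2 + Real.log σ :=
      Real.log_mul (by norm_num) hσ.ne'
    have hlog2 : (0:ℝ) ≤ Real.log 2 := Real.log_nonneg (by norm_num)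
    -- -log s = -(log(ε+y²))/2 ≥ -(log 2 + log ε /2)/2 = -log2/2 + L/4 ≥ L/8
    have h3 : -Real.log s ≥ -(Real.log 2 + Real.log ε / 2) / 2 := by
      rw [hlogs]
      have := hlog2σ.trans_eq h2
      linarith [this, hlogσ]
    have h4 : -Real.log ε / 8 ≥ Real.log 2 / 2 := by linarith [hlog16, hlog16']
    linarith
  have hK0 := K0_ge_log hs hs1
  have hloginv : Real.log (1 / s) = -Real.log s := by rw [one_div, Real.log_inv]
  calc Real.exp (-1) * (-Real.log ε / 8) ≤ Real.exp (-1) * (-Real.log s) := by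
        apply mul_le_mul_of_nonneg_left hkey (Real.exp_pos _).le
    _ = Real.exp (-1) * Real.log (1 / s) := by rw [hloginv]
    _ ≤ K0 s := hK0

lemma bound_A {ε y : ℝ} (hε : 0 < ε) (hε16 : ε ≤ 1/16) (hy : 0 < y)
    (hyσ : y ≤ Real.sqrt ε) :
    (1 / (K0 y * (ε + y ^ 2)))
        * (hatK1 (Real.sqrt (ε + y ^ 2)) / K0 (Real.sqrt (ε + y ^ 2)) - hatK1 y / K0 y)
        * (y * K0 y ^ 2)
      ≤ (16 * Real.exp 1 / (-Real.log ε))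
          / (Real.sqrt ε * Real.sqrt (Real.sqrt ε)) * Real.sqrt y := by
  set σ := Real.sqrt ε with hσdef
  have hσ : 0 < σ := Real.sqrt_pos.2 hε
  have hσ1 : σ ≤ 1 := by
    rw [hσdef, show (1:ℝ) = Real.sqrt 1 from (Real.sqrt_one).symm]
    exact Real.sqrt_le_sqrt (by linarith)
  have hy2σ : y ^ 2 ≤ σ := by nlinarith
  have hL : 0 < -Real.log ε := by
    have := Real.log_neg hε (by linarith)
    linarith
  set L := -Real.log ε with hLdef
  set s := Real.sqrt (ε + y ^ 2) with hsdef
  have hys : y ≤ s := sqrt_ge_self_aux hε hy.le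
  have hs : 0 < s := lt_of_lt_of_le hy hys
  have hs2 : s ^ 2 = ε + y ^ 2 := Real.sq_sqrt (by positivity)
  have hσs : σ ≤ s := Real.sqrt_le_sqrt (by nlinarith)
  have hk := K0s_lower hε hε16 hy hy2σ
  set k := Real.exp (-1) * (L / 8) with hkdef
  have hkpos : 0 < k := by
    rw [hkdef]
    positivity
  set c := (16 * Real.exp 1 / L) / (σ * Real.sqrt σ) * Real.sqrt y with hcdef
  have hcpos : 0 ≤ c := by
    rw [hcdef]
    positivity
  apply f_le_aux hε hy
  rw [← hsdef, ← hs2]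
  -- goal : y * (log s - log y) ≤ c * (s^2 * K0 s)
  have step1 : y * (Real.log s - Real.log y) ≤ 2 * Real.sqrt y * Real.sqrt s :=
    log_diff_le_sqrt hy hys
  have hid : c * (s ^ 2 * k) = 2 * Real.sqrt y * (s ^ 2 / (σ * Real.sqrt σ)) := by
    rw [hcdef, hkdef, Real.exp_neg]
    field_simp
    ring
  have step2 : Real.sqrt s ≤ s ^ 2 / (σ * Real.sqrt σ) := by
    rw [le_div_iff₀ (by positivity)]
    have h1 : σ * Real.sqrt σ ≤ s * Real.sqrt s := by
      apply mul_le_mul hσs (Real.sqrt_le_sqrt hσs) (Real.sqrt_nonneg _) hs.le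
    calc Real.sqrt s * (σ * Real.sqrt σ) ≤ Real.sqrt s * (s * Real.sqrt s) := by
          apply mul_le_mul_of_nonneg_left h1 (Real.sqrt_nonneg _)
      _ = s * (Real.sqrt s * Real.sqrt s) := by ring
      _ = s * s := by rw [Real.mul_self_sqrt hs.le]
      _ = s ^ 2 := by ring
  calc y * (Real.log s - Real.log y) ≤ 2 * Real.sqrt y * Real.sqrt s := step1
    _ ≤ 2 * Real.sqrt y * (s ^ 2 / (σ * Real.sqrt σ)) := by
        apply mul_le_mul_of_nonneg_left step2 (by positivity)
    _ = c * (s ^ 2 * k) := hid.symm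
    _ ≤ c * (s ^ 2 * K0 s) := by
        apply mul_le_mul_of_nonneg_left _ hcpos
        apply mul_le_mul_of_nonneg_left hk (by positivity)

lemma bound_B {ε y : ℝ} (hε : 0 < ε) (hε16 : ε ≤ 1/16) (hy : 0 < y)
    (hyδ : y ≤ Real.sqrt (Real.sqrt ε)) :
    (1 / (K0 y * (ε + y ^ 2)))
        * (hatK1 (Real.sqrt (ε + y ^ 2)) / K0 (Real.sqrt (ε + y ^ 2)) - hatK1 y / K0 y)
        * (y * K0 y ^ 2)
      ≤ (8 * Real.exp 1 / (-Real.log ε)) * Real.sqrt ε / y ^ 2 := by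
  set σ := Real.sqrt ε with hσdef
  have hσ : 0 < σ := Real.sqrt_pos.2 hε
  have hy2σ : y ^ 2 ≤ σ := by
    have h1 : y ^ 2 ≤ Real.sqrt σ ^ 2 := by nlinarith [Real.sqrt_nonneg σ]
    rwa [Real.sq_sqrt hσ.le] at h1
  have hL : 0 < -Real.log ε := by
    have := Real.log_neg hε (by linarith)
    linarith
  set L := -Real.log ε with hLdef
  set s := Real.sqrt (ε + y ^ 2) with hsdef
  have hys : y ≤ s := sqrt_ge_self_aux hε hy.le
  have hs : 0 < s := lt_of_lt_of_le hy hys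
  have hk := K0s_lower hε hε16 hy hy2σ
  set k := Real.exp (-1) * (L / 8) with hkdef
  have hkpos : 0 < k := by rw [hkdef]; positivity
  set c := (8 * Real.exp 1 / L) * σ / y ^ 2 with hcdef
  have hcpos : 0 ≤ c := by rw [hcdef]; positivity
  apply f_le_aux hε hy
  rw [← hsdef]
  have step1 : y * (Real.log s - Real.log y) ≤ σ :=
    log_diff_le_div hy hys (s_le_add hε hy.le)
  have hid : c * (y ^ 2 * k) = σ := by
    rw [hcdef, hkdef, Real.exp_neg]
    field_simp
  calc y * (Real.log s - Real.log y) ≤ σ := step1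
    _ = c * (y ^ 2 * k) := hid.symm
    _ ≤ c * ((ε + y ^ 2) * K0 s) := by
        apply mul_le_mul_of_nonneg_left _ hcpos
        apply mul_le_mul (by nlinarith) hk hkpos.le (by positivity)

lemma bound_C {ε y M : ℝ} (hε : 0 < ε) (hε1 : ε ≤ 1) (hy : 0 < y) (hyM : y ≤ M) :
    (1 / (K0 y * (ε + y ^ 2)))
        * (hatK1 (Real.sqrt (ε + y ^ 2)) / K0 (Real.sqrt (ε + y ^ 2)) - hatK1 y / K0 y)
        * (y * K0 y ^ 2)
      ≤ (Real.sqrt ε / K0 (Real.sqrt (1 + M ^ 2))) / y ^ 2 := by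
  set σ := Real.sqrt ε with hσdef
  have hσ : 0 < σ := Real.sqrt_pos.2 hε
  set s := Real.sqrt (ε + y ^ 2) with hsdef
  have hys : y ≤ s := sqrt_ge_self_aux hε hy.le
  have hs : 0 < s := lt_of_lt_of_le hy hys
  have hsT : s ≤ Real.sqrt (1 + M ^ 2) := Real.sqrt_le_sqrt (by nlinarith)
  have hT : (0:ℝ) < Real.sqrt (1 + M ^ 2) := lt_of_lt_of_le hs hsT
  have hcT : 0 < K0 (Real.sqrt (1 + M ^ 2)) := K0_pos hT
  have hk : K0 (Real.sqrt (1 + M ^ 2)) ≤ K0 s := K0_anti hs hsT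
  set cT := K0 (Real.sqrt (1 + M ^ 2)) with hcTdef
  set c := (σ / cT) / y ^ 2 with hcdef
  have hcpos : 0 ≤ c := by rw [hcdef]; positivity
  apply f_le_aux hε hy
  rw [← hsdef]
  have step1 : y * (Real.log s - Real.log y) ≤ σ :=
    log_diff_le_div hy hys (s_le_add hε hy.le)
  have hid : c * (y ^ 2 * cT) = σ := by
    rw [hcdef]
    field_simp
  calc y * (Real.log s - Real.log y) ≤ σ := step1
    _ = c * (y ^ 2 * cT) := hid.symm
    _ ≤ c * ((ε + y ^ 2) * K0 s) := by
        apply mul_le_mul_of_nonneg_left _ hcpos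
        apply mul_le_mul (by nlinarith) hk hcT.le (by positivity)

lemma integrableOn_div_sq {a b c : ℝ} (ha : 0 < a) :
    IntegrableOn (fun y : ℝ => c / y ^ 2) (Set.Ioc a b) := by
  rcases le_or_gt a b with hab | hab
  · have hcont : ContinuousOn (fun y : ℝ => c / y ^ 2) (Set.Icc a b) := by
      intro y hy
      have hy0 : (0:ℝ) < y := lt_of_lt_of_le ha hy.1
      exact (continuousAt_const.div (by fun_prop) (by positivity)).continuousWithinAt
    exact (hcont.integrableOn_Icc).mono_set Set.Ioc_subset_Icc_self
  · rw [Set.Ioc_eq_empty (not_lt.2 hab.le)]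
    exact integrableOn_empty

lemma I_le {ε M : ℝ} (hM : 0 < M) (hε : 0 < ε) (hε16 : ε ≤ 1/16)
    (hδM : Real.sqrt (Real.sqrt ε) ≤ M) :
    ∫ y in Set.Ioc (0:ℝ) M,
        (1 / (K0 y * (ε + y ^ 2)))
          * (hatK1 (Real.sqrt (ε + y ^ 2)) / K0 (Real.sqrt (ε + y ^ 2)) - hatK1 y / K0 y)
          * (y * K0 y ^ 2)
      ≤ 24 * Real.exp 1 / (-Real.log ε)
          + Real.sqrt (Real.sqrt ε) / K0 (Real.sqrt (1 + M ^ 2)) := by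
  set F : ℝ → ℝ := fun y => (1 / (K0 y * (ε + y ^ 2)))
      * (hatK1 (Real.sqrt (ε + y ^ 2)) / K0 (Real.sqrt (ε + y ^ 2)) - hatK1 y / K0 y)
      * (y * K0 y ^ 2) with hFdef
  set σ := Real.sqrt ε with hσdef
  set δ := Real.sqrt σ with hδdef
  have hσ : 0 < σ := Real.sqrt_pos.2 hε
  have hδ : 0 < δ := Real.sqrt_pos.2 hσ
  have hσ1 : σ ≤ 1 := by
    rw [hσdef, show (1:ℝ) = Real.sqrt 1 from (Real.sqrt_one).symm]
    exact Real.sqrt_le_sqrt (by linarith)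
  have hσδ : σ ≤ δ := by
    rw [hδdef]
    nlinarith [Real.sq_sqrt hσ.le, Real.sqrt_nonneg σ]
  have hσM : σ ≤ M := hσδ.trans hδM
  have hε1 : ε ≤ 1 := by linarith
  have hL : 0 < -Real.log ε := by
    have := Real.log_neg hε (by linarith)
    linarith
  set L := -Real.log ε with hLdef
  have hcT : 0 < K0 (Real.sqrt (1 + M ^ 2)) :=
    K0_pos (Real.sqrt_pos.2 (by positivity))
  set cT := K0 (Real.sqrt (1 + M ^ 2)) with hcTdef
  have hFint : IntegrableOn F (Set.Ioc (0:ℝ) M) := f_integrableOn hε hε1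
  have hFintA : IntegrableOn F (Set.Ioc (0:ℝ) σ) :=
    hFint.mono_set (Set.Ioc_subset_Ioc_right hσM)
  have hFintB : IntegrableOn F (Set.Ioc σ δ) :=
    hFint.mono_set (Set.Ioc_subset_Ioc hσ.le hδM)
  have hFintC : IntegrableOn F (Set.Ioc δ M) :=
    hFint.mono_set (Set.Ioc_subset_Ioc_left hδ.le)
  have hsplit1 : ∫ y in Set.Ioc (0:ℝ) M, F y
      = (∫ y in Set.Ioc (0:ℝ) δ, F y) + ∫ y in Set.Ioc δ M, F y := by
    rw [← MeasureTheory.setIntegral_union (Set.Ioc_disjoint_Ioc_of_le le_rfl) measurableSet_Ioc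
      (hFint.mono_set (Set.Ioc_subset_Ioc_right hδM)) hFintC]
    rw [Set.Ioc_union_Ioc_eq_Ioc hδ.le hδM]
  have hsplit2 : ∫ y in Set.Ioc (0:ℝ) δ, F y
      = (∫ y in Set.Ioc (0:ℝ) σ, F y) + ∫ y in Set.Ioc σ δ, F y := by
    rw [← MeasureTheory.setIntegral_union (Set.Ioc_disjoint_Ioc_of_le le_rfl) measurableSet_Ioc
      hFintA hFintB]
    rw [Set.Ioc_union_Ioc_eq_Ioc hσ.le hσδ]
  rw [hsplit1, hsplit2]
  -- Region A
  have hA : ∫ y in Set.Ioc (0:ℝ) σ, F y ≤ 16 * Real.exp 1 / L := by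
    have h1 : ∫ y in Set.Ioc (0:ℝ) σ, F y
        ≤ ∫ y in Set.Ioc (0:ℝ) σ, (16 * Real.exp 1 / L) / (σ * Real.sqrt σ) * Real.sqrt y := by
      apply MeasureTheory.setIntegral_mono_on hFintA _ measurableSet_Ioc
      · intro y hy
        exact bound_A hε hε16 hy.1 hy.2
      · exact (Continuous.integrableOn_Ioc (by fun_prop))
    refine h1.trans ?_
    refine (integral_sqrt_bound hσ (by positivity)).trans (le_of_eq ?_)
    have hne : σ * Real.sqrt σ ≠ 0 := by positivity
    field_simp
  -- Region B
  have hB : ∫ y in Set.Ioc σ δ, F y ≤ 8 * Real.exp 1 / L := by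
    have h1 : ∫ y in Set.Ioc σ δ, F y
        ≤ ∫ y in Set.Ioc σ δ, (8 * Real.exp 1 / L) * σ / y ^ 2 := by
      apply MeasureTheory.setIntegral_mono_on hFintB (integrableOn_div_sq hσ)
        measurableSet_Ioc
      intro y hy
      exact bound_B hε hε16 (hσ.trans hy.1) (hy.2.trans (le_refl _))
    refine h1.trans ?_
    refine (integral_inv_sq_bound hσ hσδ (by positivity)).trans (le_of_eq ?_)
    field_simp
  -- Region C
  have hC : ∫ y in Set.Ioc δ M, F y ≤ δ / cT := by
    have h1 : ∫ y in Set.Ioc δ M, F y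
        ≤ ∫ y in Set.Ioc δ M, (σ / cT) / y ^ 2 := by
      apply MeasureTheory.setIntegral_mono_on hFintC (integrableOn_div_sq hδ)
        measurableSet_Ioc
      intro y hy
      exact bound_C hε hε1 (hδ.trans hy.1) hy.2
    refine h1.trans ?_
    refine (integral_inv_sq_bound hδ hδM (by positivity)).trans (le_of_eq ?_)
    rw [div_div, hδdef]
    rw [mul_comm cT (Real.sqrt σ), ← div_div, Real.div_sqrt]
  have hfinal : 16 * Real.exp 1 / L + 8 * Real.exp 1 / L = 24 * Real.exp 1 / L := by
    field_simp
    ring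
  linarith

/-- Assertion (5.48) of Lemma 5.8: the singular integral
`∫₀^M [1/(K₀(y)(ε+y²))] (K̂₁/K₀(√(ε+y²)) − K̂₁/K₀(y)) y K₀(y)² dy`
is nonnegative and converges to `0` as `ε → 0+`. -/
theorem singular_integral_vanishes_II (M : ℝ) (hM : 0 < M) :
    (∀ ε : ℝ, 0 < ε →
      0 ≤ ∫ y in Set.Ioc (0 : ℝ) M,
        (1 / (K0 y * (ε + y ^ 2)))
          * (hatK1 (Real.sqrt (ε + y ^ 2)) / K0 (Real.sqrt (ε + y ^ 2))
              - hatK1 y / K0 y)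
          * (y * K0 y ^ 2)) ∧
    Tendsto
      (fun ε : ℝ => ∫ y in Set.Ioc (0 : ℝ) M,
        (1 / (K0 y * (ε + y ^ 2)))
          * (hatK1 (Real.sqrt (ε + y ^ 2)) / K0 (Real.sqrt (ε + y ^ 2))
              - hatK1 y / K0 y)
          * (y * K0 y ^ 2))
      (nhdsWithin 0 (Set.Ioi 0)) (nhds 0) := by
  have hnonneg : ∀ ε : ℝ, 0 < ε →
      0 ≤ ∫ y in Set.Ioc (0 : ℝ) M,
        (1 / (K0 y * (ε + y ^ 2)))
          * (hatK1 (Real.sqrt (ε + y ^ 2)) / K0 (Real.sqrt (ε + y ^ 2))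
              - hatK1 y / K0 y)
          * (y * K0 y ^ 2) := by
    intro ε hε
    apply MeasureTheory.setIntegral_nonneg measurableSet_Ioc
    intro y hy
    exact f_nonneg hε hy.1
  refine ⟨hnonneg, ?_⟩
  set B : ℝ → ℝ := fun ε => 24 * Real.exp 1 / (-Real.log ε)
      + Real.sqrt (Real.sqrt ε) / K0 (Real.sqrt (1 + M ^ 2)) with hBdef
  have hLtendsto : Tendsto (fun ε : ℝ => -Real.log ε) (nhdsWithin 0 (Set.Ioi 0)) atTop :=
    tendsto_neg_atBot_atTop.comp Real.tendsto_log_nhdsGT_zero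
  have h1 : Tendsto (fun ε : ℝ => 24 * Real.exp 1 / (-Real.log ε))
      (nhdsWithin 0 (Set.Ioi 0)) (nhds 0) :=
    Tendsto.div_atTop tendsto_const_nhds hLtendsto
  have h2 : Tendsto (fun ε : ℝ => Real.sqrt (Real.sqrt ε) / K0 (Real.sqrt (1 + M ^ 2)))
      (nhdsWithin 0 (Set.Ioi 0)) (nhds 0) := by
    have h3 : Tendsto (fun ε : ℝ => Real.sqrt (Real.sqrt ε)) (nhds 0) (nhds 0) := by
      have := (Real.continuous_sqrt.comp Real.continuous_sqrt).tendsto 0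
      simp only [Function.comp_apply, Real.sqrt_zero] at this
      exact this
    have h4 := (h3.mono_left (nhdsWithin_le_nhds (s := Set.Ioi (0:ℝ)))).div_const
      (K0 (Real.sqrt (1 + M ^ 2)))
    simpa using h4
  have hBtendsto : Tendsto B (nhdsWithin 0 (Set.Ioi 0)) (nhds 0) := by
    have := h1.add h2
    simpa using this
  apply tendsto_of_tendsto_of_tendsto_of_le_of_le' tendsto_const_nhds hBtendsto
  · filter_upwards [self_mem_nhdsWithin] with ε hε
    exact hnonneg ε hε
  · have hmem : Set.Ioc (0:ℝ) (min (1/16) (M^4)) ∈ nhdsWithin (0:ℝ) (Set.Ioi 0) :=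
      Ioc_mem_nhdsGT_of_mem ⟨le_refl 0, by positivity⟩
    filter_upwards [hmem] with ε hε
    obtain ⟨hε0, hεle⟩ := hε
    have hε16 : ε ≤ 1/16 := hεle.trans (min_le_left _ _)
    have hεM4 : ε ≤ M^4 := hεle.trans (min_le_right _ _)
    have hδM : Real.sqrt (Real.sqrt ε) ≤ M := by
      have e1 : Real.sqrt (M^4) = M^2 := by
        rw [show M^4 = (M^2)^2 by ring, Real.sqrt_sq (by positivity)]
      have e2 : Real.sqrt ε ≤ M^2 := by
        rw [← e1]; exact Real.sqrt_le_sqrt hεM4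
      calc Real.sqrt (Real.sqrt ε) ≤ Real.sqrt (M^2) := Real.sqrt_le_sqrt e2
        _ = M := Real.sqrt_sq hM.le
    exact I_le hM hε0 hε16 hδM
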